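/- Let G be an (s,t)-layered graph and P a simple s-to-t path whose sequence of back-edges, in the order of traversal, is nonempty. Let A be the tail of the first back-edge and B the head of the last back-edge. Then the decomposition P = P_1 ∘ P_0 ∘ P_2, where P_1 = P_{s→A}, P_0 = P_{A→B}, P_2 = P_{B→t}, satisfies: P_1 and P_2 consist entirely of forward-edges (so λ is strictly increasing along each), w(P_1) = d(s,A), and w(P_2) = d(s,t) − d(s,B). -/

import Mathlib

variable {V : Type*}

/-- Total weight of a walk given as a list of vertices. -/
def walkWt (w : V → V → ℝ) : List V → ℝ
  | [] => 0
  | [_] => 0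
  | a :: b :: rest => w a b + walkWt w (b :: rest)

/-- The list of (directed) edges traversed by a walk. -/
def listEdges : List V → List (V × V)
  | [] => []
  | [_] => []
  | a :: b :: rest => (a, b) :: listEdges (b :: rest)

/-- `l` is a walk from `u` to `v` in the digraph with edge relation `E`. -/
def IsWalkFrom (E : V → V → Prop) (u v : V) (l : List V) : Prop :=
  l.Chain' E ∧ l.head? = some u ∧ l.getLast? = some v

/-- `l` is a (simple) path from `u` to `v`. -/
def IsPathFrom (E : V → V → Prop) (u v : V) (l : List V) : Prop :=
  IsWalkFrom E u v l ∧ l.Nodup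

/-- `d` is the shortest-path distance function of `(E, w)`: it lower-bounds the weight of
every path, and is achieved by some path whenever some path exists. -/
def IsDistFn (E : V → V → Prop) (w : V → V → ℝ) (d : V → V → ℝ) : Prop :=
  (∀ u v l, IsPathFrom E u v l → d u v ≤ walkWt w l) ∧
  (∀ u v, (∃ l, IsPathFrom E u v l) → ∃ l, IsPathFrom E u v l ∧ walkWt w l = d u v)

/-- All edge weights are (strictly) positive. -/
def PosWeights (E : V → V → Prop) (w : V → V → ℝ) : Prop :=
  ∀ u v, E u v → 0 < w u v

/-- A back-edge relative to source `s`: `d(s,u) + w(u,v) > d(s,v)`. -/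
def IsBackEdge (E : V → V → Prop) (w : V → V → ℝ) (d : V → V → ℝ) (s : V) (p : V × V) : Prop :=
  E p.1 p.2 ∧ d s p.2 < d s p.1 + w p.1 p.2

/-- A forward-edge relative to source `s`: `d(s,u) + w(u,v) = d(s,v)`. -/
def IsForwardEdge (E : V → V → Prop) (w : V → V → ℝ) (d : V → V → ℝ) (s : V) (p : V × V) : Prop :=
  E p.1 p.2 ∧ d s p.1 + w p.1 p.2 = d s p.2

/-- A forward path: all its edges are forward-edges. -/
def IsForwardPath (E : V → V → Prop) (w : V → V → ℝ) (d : V → V → ℝ) (s : V) (l : List V) : Prop :=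
  ∀ p ∈ listEdges l, IsForwardEdge E w d s p

/-- `(s,t)`-straight graph: every vertex lies on a shortest `s → t` path. -/
def IsStraight (E : V → V → Prop) (w : V → V → ℝ) (d : V → V → ℝ) (s t : V) : Prop :=
  (∀ u, d s u + d u t = d s t) ∧
  (∀ u, ∃ l, IsPathFrom E s t l ∧ u ∈ l ∧ walkWt w l = d s t)

/-- `(s,t)`-layered graph. -/
def IsLayered (E : V → V → Prop) (w : V → V → ℝ) (d : V → V → ℝ) (s t : V) : Prop :=
  IsStraight E w d s t ∧
  (∀ u v, E u v → d s u ≠ d s v) ∧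
  (∀ u v, E u v → d s u < d s v → ∀ x, d s x ≤ d s u ∨ d s u + w u v ≤ d s x)

/-- The layer of `u`: the rank of `d(s,u)` among the distinct values of `d(s,·)`. -/
noncomputable def layer [Fintype V] (d : V → V → ℝ) (s : V) (u : V) : ℕ :=
  ((Finset.univ.image (fun x : V => d s x)).filter (fun p => p ≤ d s u)).card

/-- An `s → t` not-shortest path. -/
def IsNotShortest (E : V → V → Prop) (w : V → V → ℝ) (d : V → V → ℝ) (s t : V)
    (l : List V) : Prop :=
  IsPathFrom E s t l ∧ d s t < walkWt w l

/-- An `s → t` next-to-shortest path: a not-shortest path of minimum weight. -/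
def IsNextToShortest (E : V → V → Prop) (w : V → V → ℝ) (d : V → V → ℝ) (s t : V)
    (l : List V) : Prop :=
  IsNotShortest E w d s t l ∧ ∀ l', IsNotShortest E w d s t l' → walkWt w l ≤ walkWt w l'

/-- Back-edge decomposition of a path `l = l1 ∘ l0 ∘ l2`, where `l0` runs from `A` to `B`,
starting with the first back-edge of `l` and ending with the last one. -/
def IsBEDecomp (E : V → V → Prop) (w : V → V → ℝ) (d : V → V → ℝ) (s t : V)
    (l l1 l0 l2 : List V) (A B : V) : Prop :=
  IsPathFrom E s A l1 ∧ IsPathFrom E A B l0 ∧ IsPathFrom E B t l2 ∧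
  l = l1 ++ l0.tail ++ l2.tail ∧
  (∀ p ∈ listEdges l1, ¬ IsBackEdge E w d s p) ∧
  (∀ p ∈ listEdges l2, ¬ IsBackEdge E w d s p) ∧
  (∃ p, (listEdges l0).head? = some p ∧ IsBackEdge E w d s p) ∧
  (∃ p, (listEdges l0).getLast? = some p ∧ IsBackEdge E w d s p)

section Aux

variable (E : V → V → Prop) (w d : V → V → ℝ) (s t : V)

lemma chain'_iff_listEdges (R : V → V → Prop) :
    ∀ l : List V, l.Chain' R ↔ ∀ p ∈ listEdges l, R p.1 p.2
  | [] => by simp [listEdges, List.Chain']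
  | [a] => by simp [listEdges, List.Chain']
  | a :: b :: rest => by
    unfold List.Chain'
    have ih : List.IsChain R (b :: rest) ↔ _ := chain'_iff_listEdges R (b :: rest)
    rw [List.isChain_cons_cons, ih]
    simp only [listEdges, List.mem_cons]
    constructor
    · rintro ⟨h1, h2⟩ p (rfl | hp)
      · exact h1
      · exact h2 p hp
    · intro h
      exact ⟨h (a, b) (Or.inl rfl), fun p hp => h p (Or.inr hp)⟩

lemma walkWt_nonneg (hpos : PosWeights E w) :
    ∀ l : List V, l.Chain' E → 0 ≤ walkWt w l
  | [] => fun _ => le_refl _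
  | [_] => fun _ => le_refl _
  | a :: b :: rest => fun h => by
    unfold List.Chain' at h
    rw [List.isChain_cons_cons] at h
    have := walkWt_nonneg hpos (b :: rest) h.2
    have := (hpos a b h.1).le
    simp only [walkWt]; linarith

lemma walkWt_append_cons :
    ∀ (xs : List V) (m : V) (ys : List V),
      walkWt w (xs ++ m :: ys) = walkWt w (xs ++ [m]) + walkWt w (m :: ys)
  | [], m, ys => by simp [walkWt]
  | [a], m, ys => by simp [walkWt]
  | a :: b :: rest, m, ys => by
    have := walkWt_append_cons (b :: rest) m ys
    simp only [List.cons_append, walkWt, List.append_eq] at this ⊢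
    linarith

lemma walkWt_concat :
    ∀ (l : List V) (u v : V), l.getLast? = some u →
      walkWt w (l ++ [v]) = walkWt w l + w u v
  | [], u, v => by simp
  | [a], u, v => by
    intro h
    simp only [List.getLast?_singleton, Option.some.injEq] at h
    subst h; simp [walkWt]
  | a :: b :: rest, u, v => by
    intro h
    have h' : (b :: rest).getLast? = some u := by
      rw [List.getLast?_cons_cons] at h; exact h
    have := walkWt_concat (b :: rest) u v h'
    simp only [List.cons_append, walkWt, List.append_eq] at this ⊢
    linarith

lemma path_split (u v : V) (xs ys : List V) (m : V)
    (h : IsPathFrom E u v (xs ++ m :: ys)) :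
    IsPathFrom E u m (xs ++ [m]) ∧ IsPathFrom E m v (m :: ys) := by
  obtain ⟨⟨hc, hh, hl⟩, hnd⟩ := h
  have hc' : ((xs ++ [m]) ++ ys).Chain' E := by simpa using hc
  unfold List.Chain' at hc'
  rw [List.isChain_append] at hc'
  have hnd' : ((xs ++ [m]) ++ ys).Nodup := by simpa using hnd
  rw [List.nodup_append] at hnd'
  have hm : m ∉ ys := fun hmem => hnd'.2.2 m (by simp) m hmem rfl
  refine ⟨⟨⟨hc'.1, ?_, by simp⟩, hnd'.1⟩,
    ⟨⟨?_, by simp, ?_⟩, List.nodup_cons.2 ⟨hm, hnd'.2.1⟩⟩⟩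
  · cases xs with
    | nil => simpa using hh
    | cons a as => simpa using hh
  · unfold List.Chain'
    rw [List.isChain_cons]
    exact ⟨fun y hy => hc'.2.2 m (by simp) y hy, hc'.2.1⟩
  · cases ys with
    | nil => simpa using hl
    | cons b bs =>
      have hl2 : ((xs ++ [m]) ++ b :: bs).getLast? = some v := by simpa using hl
      rw [List.getLast?_append_of_ne_nil _ (by simp)] at hl2
      rw [List.getLast?_cons_cons]
      exact hl2

lemma d_triangle (hpos : PosWeights E w) (hd : IsDistFn E w d)
    (hS : IsStraight E w d s t) (u v : V) (he : E u v) :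
    d s v ≤ d s u + w u v := by
  obtain ⟨l, hl, hu, hwl⟩ := hS.2 u
  obtain ⟨xs, ys, rfl⟩ := List.append_of_mem hu
  obtain ⟨hpre, hsuf⟩ := path_split E s t xs ys u hl
  have hw1 : d s u ≤ walkWt w (xs ++ [u]) := hd.1 s u _ hpre
  have hw2 : d u t ≤ walkWt w (u :: ys) := hd.1 u t _ hsuf
  have hsplit := walkWt_append_cons w xs u ys
  have hsum : d s u + d u t = d s t := hS.1 u
  have hpreEq : walkWt w (xs ++ [u]) = d s u := by linarith
  by_cases hv : v ∈ xs ++ [u]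
  · -- v appears before u on the path: d s v ≤ d s u < d s u + w u v
    obtain ⟨ps, qs, hvs⟩ := List.append_of_mem hv
    rw [hvs] at hpre
    obtain ⟨hpre2, hsuf2⟩ := path_split E s u ps qs v hpre
    have h1 : d s v ≤ walkWt w (ps ++ [v]) := hd.1 s v _ hpre2
    have h2 : 0 ≤ walkWt w (v :: qs) := walkWt_nonneg E w hpos _ hsuf2.1.1
    have h3 := walkWt_append_cons w ps v qs
    rw [hvs] at hpreEq
    have := hpos u v he
    linarith
  · -- extend the prefix by the edge (u,v)
    have hlast : (xs ++ [u]).getLast? = some u := by simp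
    have hpath : IsPathFrom E s v ((xs ++ [u]) ++ [v]) := by
      obtain ⟨⟨hc, hh, hl'⟩, hnd⟩ := hpre
      refine ⟨⟨?_, ?_, ?_⟩, ?_⟩
      · unfold List.Chain'
        rw [List.isChain_append]
        refine ⟨hc, List.isChain_singleton v, fun x hx y hy => ?_⟩
        rw [hlast] at hx
        simp only [List.head?_cons, Option.some.injEq] at hy
        cases hx; cases hy; exact he
      · cases xs with
        | nil => simpa using hh
        | cons a as => simpa using hh
      · rw [List.getLast?_append_of_ne_nil _ (by simp)]; simp
      · rw [List.nodup_append]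
        exact ⟨hnd, List.nodup_singleton v, fun x hx y hy hxy => by
          simp at hy; subst hy; subst hxy; exact hv hx⟩
    have := hd.1 s v _ hpath
    rw [walkWt_concat w (xs ++ [u]) u v hlast] at this
    linarith

lemma d_self (hpos : PosWeights E w) (hd : IsDistFn E w d) : d s s = 0 := by
  have hpath : IsPathFrom E s s [s] := ⟨⟨List.isChain_singleton s, rfl, rfl⟩, List.nodup_singleton s⟩
  have h1 : d s s ≤ 0 := hd.1 s s [s] hpath
  obtain ⟨l, hl, hw⟩ := hd.2 s s ⟨[s], hpath⟩
  have h2 : 0 ≤ walkWt w l := walkWt_nonneg E w hpos l hl.1.1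
  linarith

lemma forward_telescope :
    ∀ (l : List V) (a b : V), l.head? = some a → l.getLast? = some b →
      (∀ p ∈ listEdges l, d s p.1 + w p.1 p.2 = d s p.2) →
      walkWt w l = d s b - d s a
  | [], a, b => by simp
  | [x], a, b => by
    intro ha hb _
    simp only [List.head?_cons, Option.some.injEq] at ha
    simp only [List.getLast?_singleton, Option.some.injEq] at hb
    subst ha; subst hb; simp [walkWt]
  | x :: y :: rest, a, b => by
    intro ha hb hfwd
    simp only [List.head?_cons, Option.some.injEq] at ha
    subst ha
    have hb' : (y :: rest).getLast? = some b := by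
      rw [List.getLast?_cons_cons] at hb; exact hb
    have hrec := forward_telescope (y :: rest) y b rfl hb'
      (fun p hp => hfwd p (by simp [listEdges]; right; exact hp))
    have hxy : d s x + w x y = d s y := hfwd (x, y) (by simp [listEdges])
    simp only [walkWt]
    rw [hrec]
    linarith

lemma layer_lt_layer [Fintype V] (u v : V) (h : d s u < d s v) :
    layer d s u < layer d s v := by
  apply Finset.card_lt_card
  rw [Finset.ssubset_iff_of_subset]
  · exact ⟨d s v, by simp [Finset.mem_filter], by simp [Finset.mem_filter, not_le, h]⟩
  · intro x hx
    simp only [Finset.mem_filter] at hx ⊢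
    exact ⟨hx.1, hx.2.trans h.le⟩

end Aux

/-- for the back-edge decomposition of a simple `s → t` path with at least one
back-edge, the prefix `l1` and suffix `l2` consist entirely of forward-edges (so the layer
strictly increases along each), with `w(l1) = d(s,A)` and `w(l2) = d(s,t) − d(s,B)`. -/
theorem stmt19 [Fintype V] (E : V → V → Prop) (w d : V → V → ℝ) (s t A B : V)
    (l l1 l0 l2 : List V)
    (hpos : PosWeights E w) (hd : IsDistFn E w d)
    (hL : IsLayered E w d s t)
    (hP : IsPathFrom E s t l)
    (hdec : IsBEDecomp E w d s t l l1 l0 l2 A B) :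
    IsForwardPath E w d s l1 ∧ IsForwardPath E w d s l2 ∧
    l1.Chain' (fun a b => layer d s a < layer d s b) ∧
    l2.Chain' (fun a b => layer d s a < layer d s b) ∧
    walkWt w l1 = d s A ∧ walkWt w l2 = d s t - d s B := by
  obtain ⟨h1, h0, h2, hlspl, hnb1, hnb2, _, _⟩ := hdec
  have hS : IsStraight E w d s t := hL.1
  -- edges of l1 / l2 are forward edges
  have hfwd1 : IsForwardPath E w d s l1 := by
    intro p hp
    have hE : E p.1 p.2 := (chain'_iff_listEdges E l1).1 h1.1.1 p hp
    have htri := d_triangle E w d s t hpos hd hS p.1 p.2 hE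
    have hnb := hnb1 p hp
    simp only [IsBackEdge, not_and, not_lt] at hnb
    exact ⟨hE, le_antisymm (hnb hE) htri⟩
  have hfwd2 : IsForwardPath E w d s l2 := by
    intro p hp
    have hE : E p.1 p.2 := (chain'_iff_listEdges E l2).1 h2.1.1 p hp
    have htri := d_triangle E w d s t hpos hd hS p.1 p.2 hE
    have hnb := hnb2 p hp
    simp only [IsBackEdge, not_and, not_lt] at hnb
    exact ⟨hE, le_antisymm (hnb hE) htri⟩
  have hlayer : ∀ (lx : List V), IsForwardPath E w d s lx →
      lx.Chain' (fun a b => layer d s a < layer d s b) := by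
    intro lx hfx
    rw [chain'_iff_listEdges]
    intro p hp
    obtain ⟨hE, heq⟩ := hfx p hp
    exact layer_lt_layer d s p.1 p.2 (by have := hpos p.1 p.2 hE; linarith)
  refine ⟨hfwd1, hfwd2, hlayer l1 hfwd1, hlayer l2 hfwd2, ?_, ?_⟩
  · have := forward_telescope w d s l1 s A h1.1.2.1 h1.1.2.2
      (fun p hp => (hfwd1 p hp).2)
    rw [this, d_self E w d s hpos hd]; ring
  · exact forward_telescope w d s l2 B t h2.1.2.1 h2.1.2.2
      (fun p hp => (hfwd2 p hp).2)
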